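/- Let $P \geq 0$ be a positive self-adjoint operator affiliated with a semifinite von Neumann algebra $(\mathcal{M},\tau)$ such that $e^{-tP} \in L_1(\mathcal{M},\tau)$ for all $t>0$ and $\tau(e^{-tP}) = t^{-D}\tau(e^{-P})$ for some $D > 0$ and all $t > 0$. Then for every $f \in L_1(\mathbb{R}_+, x^{D-1}dx)$ one has $f(P) \in L_1(\mathcal{M},\tau)$ and $\tau(f(P)) = \frac{1}{\Gamma(D)}\int_0^\infty x^{D-1}f(x)\,dx \cdot \tau(e^{-P})$. -/

import Mathlib

open MeasureTheory

open Set
open scoped NNReal ENNReal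

lemma moments_ext (μ ρ : Measure ℝ) [IsFiniteMeasure μ] [IsFiniteMeasure ρ]
    (hμ : μ (Icc 0 1)ᶜ = 0) (hρ : ρ (Icc 0 1)ᶜ = 0)
    (hm : ∀ n : ℕ, ∫ x, x ^ n ∂μ = ∫ x, x ^ n ∂ρ) : μ = ρ := by
  -- first: real-integral equality for continuous functions
  have key : ∀ g : ℝ → ℝ, Continuous g → ∫ x, g x ∂μ = ∫ x, g x ∂ρ := by
    intro g hg
    have hμm : ∀ᵐ x ∂μ, x ∈ Icc (0:ℝ) 1 := by
      rw [ae_iff]; exact hμ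
    have hρm : ∀ᵐ x ∂ρ, x ∈ Icc (0:ℝ) 1 := by
      rw [ae_iff]; exact hρ
    rw [← Measure.restrict_eq_self_of_ae_mem hμm, ← Measure.restrict_eq_self_of_ae_mem hρm] at hm ⊢
    set μ' := μ.restrict (Icc 0 1)
    set ρ' := ρ.restrict (Icc 0 1)
    have hintμ : ∀ h : ℝ → ℝ, Continuous h → Integrable h μ' :=
      fun h hh => (hh.continuousOn.integrableOn_compact isCompact_Icc)
    have hintρ : ∀ h : ℝ → ℝ, Continuous h → Integrable h ρ' :=
      fun h hh => (hh.continuousOn.integrableOn_compact isCompact_Icc)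
    have hpoly : ∀ p : Polynomial ℝ, ∫ x, p.eval x ∂μ' = ∫ x, p.eval x ∂ρ' := by
      intro p
      have h1 : ∀ (m : Measure ℝ) [IsFiniteMeasure m],
          (∀ h : ℝ → ℝ, Continuous h → Integrable h m) →
          ∫ x, p.eval x ∂m = ∑ i ∈ Finset.range (p.natDegree + 1),
            p.coeff i * ∫ x, x ^ i ∂m := by
        intro m _ hint
        have : ∀ x : ℝ, p.eval x = ∑ i ∈ Finset.range (p.natDegree + 1),
            p.coeff i * x ^ i := fun x => Polynomial.eval_eq_sum_range (p := p) x
        simp_rw [this]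
        rw [integral_finset_sum]
        · exact Finset.sum_congr rfl fun i _ => integral_const_mul _ _
        · exact fun i _ => ((hint _ (continuous_pow i)).const_mul _)
      rw [h1 μ' hintμ, h1 ρ' hintρ]
      exact Finset.sum_congr rfl fun i _ => by rw [hm i]
    -- epsilon argument
    have habs : ∀ ε > (0:ℝ), |∫ x, g x ∂μ' - ∫ x, g x ∂ρ'| ≤ 0 + ε := by
      intro ε hε
      set M : ℝ := (μ' univ).toReal + (ρ' univ).toReal + 1 with hM
      have hM1 : 1 ≤ M := by
        have := ENNReal.toReal_nonneg (a := μ' univ)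
        have := ENNReal.toReal_nonneg (a := ρ' univ); linarith
      have hMpos : 0 < M := by linarith
      obtain ⟨p, hp⟩ := exists_polynomial_near_of_continuousOn 0 1 g hg.continuousOn
        (ε / M) (by positivity)
      have est : ∀ (m : Measure ℝ) [IsFiniteMeasure m], (∀ᵐ x ∂m, x ∈ Icc (0:ℝ) 1) →
          (Integrable g m) → (Integrable (fun x => p.eval x) m) →
          |∫ x, g x ∂m - ∫ x, p.eval x ∂m| ≤ ε / M * (m univ).toReal := by
        intro m _ hmem hig hip
        rw [← integral_sub hig hip]
        have := norm_integral_le_of_norm_le_const (μ := m)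
          (f := fun x => g x - p.eval x) (C := ε / M) ?_
        · simpa [measureReal_def] using this
        · filter_upwards [hmem] with x hx
          rw [Real.norm_eq_abs, abs_sub_comm]
          exact (hp x hx).le
      have e1 := est μ' (ae_restrict_mem measurableSet_Icc) (hintμ g hg)
        (hintμ _ p.continuous)
      have e2 := est ρ' (ae_restrict_mem measurableSet_Icc) (hintρ g hg)
        (hintρ _ p.continuous)
      have hq := hpoly p
      have b1 : (μ' univ).toReal ≤ M - 1 := by
        rw [hM]; have : (0:ℝ) ≤ (ρ' univ).toReal := ENNReal.toReal_nonneg; linarith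
      have b2 : (ρ' univ).toReal ≤ M - 1 := by
        rw [hM]; have : (0:ℝ) ≤ (μ' univ).toReal := ENNReal.toReal_nonneg; linarith
      have hεM : 0 ≤ ε / M := by positivity
      have hsum : (μ' univ).toReal + (ρ' univ).toReal = M - 1 := by rw [hM]; ring
      have hcancel : ε / M * M = ε := div_mul_cancel₀ ε (ne_of_gt hMpos)
      calc |∫ x, g x ∂μ' - ∫ x, g x ∂ρ'|
          ≤ |∫ x, g x ∂μ' - ∫ x, Polynomial.eval x p ∂μ'|
            + |∫ x, Polynomial.eval x p ∂μ' - ∫ x, g x ∂ρ'| := abs_sub_le _ _ _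
        _ = |∫ x, g x ∂μ' - ∫ x, Polynomial.eval x p ∂μ'|
            + |∫ x, g x ∂ρ' - ∫ x, Polynomial.eval x p ∂ρ'| := by rw [hq]; congr 1; exact abs_sub_comm _ _
        _ ≤ ε / M * (μ' univ).toReal + ε / M * (ρ' univ).toReal := add_le_add e1 e2
        _ = ε / M * (M - 1) := by rw [← hsum]; ring
        _ ≤ 0 + ε := by rw [zero_add]; nlinarith [hεM, hε.le, hMpos, hcancel]
    have := le_of_forall_pos_le_add habs
    have h0 : |∫ x, g x ∂μ' - ∫ x, g x ∂ρ'| = 0 := le_antisymm this (abs_nonneg _)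
    have := abs_eq_zero.mp h0
    linarith [sub_eq_zero.mp this]
  -- now lintegral version for bounded continuous ℝ≥0 functions
  apply ext_of_forall_lintegral_eq_of_IsFiniteMeasure
  intro f
  have hc : Continuous fun x => (f x : ℝ) := NNReal.continuous_coe.comp f.continuous
  have hiμ : Integrable (fun x => (f x : ℝ)) μ := f.integrable_of_nnreal μ
  have hiρ : Integrable (fun x => (f x : ℝ)) ρ := f.integrable_of_nnreal ρ
  rw [lintegral_coe_eq_integral _ hiμ, lintegral_coe_eq_integral _ hiρ, key _ hc]

/-- Heat-trace asymptotics determine the trace of all functions of `P`.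

For a positive self-adjoint operator `P` affiliated with a semifinite von Neumann
algebra `(𝓜,τ)`, the functional `f ↦ τ(f(P))` is represented by a Borel measure `ν`
on `[0,∞)` (the spectral measure of `P` weighted by `τ`); we formalize the statement
in terms of this measure.  The hypotheses say that `e^{-tP} ∈ L₁(𝓜,τ)` for all `t > 0`
(integrability of `x ↦ e^{-tx}` against `ν`) and `τ(e^{-tP}) = t^{-D} τ(e^{-P})`.
The conclusion is that every `f ∈ L¹(ℝ₊, x^{D-1}dx)` satisfies `f(P) ∈ L₁(𝓜,τ)` and
`τ(f(P)) = Γ(D)⁻¹ ∫₀^∞ x^{D-1} f(x) dx ⬝ τ(e^{-P})`. -/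
theorem stmt11 (D : ℝ) (hD : 0 < D) (ν : Measure ℝ)
    (hsupp : ν (Set.Iio 0) = 0)
    (hexp : ∀ t : ℝ, 0 < t → Integrable (fun x => Real.exp (-(t * x))) ν)
    (hscal : ∀ t : ℝ, 0 < t →
      ∫ x, Real.exp (-(t * x)) ∂ν = t ^ (-D) * ∫ x, Real.exp (-x) ∂ν) :
    ∀ f : ℝ → ℝ, Measurable f →
      Integrable (fun x => x ^ (D - 1) * f x) (volume.restrict (Set.Ioi 0)) →
      Integrable f ν ∧
        ∫ x, f x ∂ν =
          (1 / Real.Gamma D) * (∫ x in Set.Ioi (0:ℝ), x ^ (D - 1) * f x) *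
            ∫ x, Real.exp (-x) ∂ν := by
  intro f hf hfint
  set C := ∫ x, Real.exp (-x) ∂ν with hC
  have hΓ : 0 < Real.Gamma D := Real.Gamma_pos_of_pos hD
  have hC0 : 0 ≤ C := integral_nonneg fun x => (Real.exp_pos _).le
  -- the map
  set φ : ℝ → ℝ := fun x => Real.exp (-x) with hφdef
  have hφ : Measurable φ := Real.measurable_exp.comp measurable_neg
  -- densities
  set w : ℝ → ℝ≥0 := fun x => Real.toNNReal (Real.exp (-x)) with hw
  have hwm : Measurable w := (Real.measurable_exp.comp measurable_neg).real_toNNReal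
  have hwc : ∀ x, (w x : ℝ) = Real.exp (-x) := fun x =>
    Real.coe_toNNReal _ (Real.exp_pos _).le
  set d : ℝ → ℝ≥0 := fun x =>
    Real.toNNReal (C / Real.Gamma D * (x ^ (D - 1) * Real.exp (-x))) with hd
  have hdm : Measurable d := by
    apply Measurable.real_toNNReal
    exact measurable_const.mul ((measurable_id.pow measurable_const).mul
      (Real.measurable_exp.comp measurable_neg))
  -- density coercion facts on `Ioi 0`
  have hdc : ∀ x ∈ Ioi (0:ℝ), (d x : ℝ) = C / Real.Gamma D * (x ^ (D - 1) * Real.exp (-x)) := by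
    intro x hx
    apply Real.coe_toNNReal
    have hx0 : (0:ℝ) < x := hx
    positivity
  -- integrability of the densities
  have hwint : Integrable (fun x => (w x : ℝ)) ν := by
    refine (hexp 1 one_pos).congr (ae_of_all _ fun x => ?_)
    show Real.exp (-(1 * x)) = (w x : ℝ)
    rw [hwc, one_mul]
  have hdint : Integrable (fun x => (d x : ℝ)) (volume.restrict (Ioi 0)) := by
    have hG := Real.GammaIntegral_convergent hD
    refine ((hG.const_mul (C / Real.Gamma D)).congr ?_)
    filter_upwards [ae_restrict_mem measurableSet_Ioi] with x hx
    rw [hdc x hx]; ring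
  -- the measures
  set νw : Measure ℝ := ν.withDensity (fun x => (w x : ℝ≥0∞)) with hνw
  set σ : Measure ℝ := (volume.restrict (Ioi 0)).withDensity (fun x => (d x : ℝ≥0∞)) with hσ
  set μ : Measure ℝ := Measure.map φ νw with hμ
  set ρ : Measure ℝ := Measure.map φ σ with hρ
  have hμuniv : ∀ s : Set ℝ, MeasurableSet s → μ s = νw (φ ⁻¹' s) := fun s hs =>
    Measure.map_apply hφ hs
  have hρuniv : ∀ s : Set ℝ, MeasurableSet s → ρ s = σ (φ ⁻¹' s) := fun s hs =>
    Measure.map_apply hφ hs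
  have hνwfin : IsFiniteMeasure νw := by
    constructor
    rw [hνw, withDensity_apply _ MeasurableSet.univ, Measure.restrict_univ,
      lintegral_coe_eq_integral _ hwint]
    exact ENNReal.ofReal_lt_top
  have hσfin : IsFiniteMeasure σ := by
    constructor
    rw [hσ, withDensity_apply _ MeasurableSet.univ, Measure.restrict_univ,
      lintegral_coe_eq_integral _ hdint]
    exact ENNReal.ofReal_lt_top
  have hμfin : IsFiniteMeasure μ := by
    constructor
    rw [hμuniv _ MeasurableSet.univ, preimage_univ]
    exact hνwfin.measure_univ_lt_top
  have hρfin : IsFiniteMeasure ρ := by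
    constructor
    rw [hρuniv _ MeasurableSet.univ, preimage_univ]
    exact hσfin.measure_univ_lt_top
  -- support in Icc 0 1
  have hμsupp : μ (Icc 0 1)ᶜ = 0 := by
    rw [hμuniv _ measurableSet_Icc.compl]
    refine measure_mono_null (t := Iio 0) (fun x hx => ?_) ?_
    · simp only [mem_preimage, mem_compl_iff, mem_Icc, not_and, not_le] at hx
      by_contra hx0
      rw [mem_Iio, not_lt] at hx0
      exact absurd (hx (Real.exp_pos _).le)
        (not_lt.mpr (Real.exp_le_one_iff.mpr (neg_nonpos.mpr hx0)))
    · rw [hνw, withDensity_apply _ measurableSet_Iio, Measure.restrict_eq_zero.mpr hsupp,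
        lintegral_zero_measure]
  have hρsupp : ρ (Icc 0 1)ᶜ = 0 := by
    rw [hρuniv _ measurableSet_Icc.compl]
    refine measure_mono_null (t := Iic 0) (fun x hx => ?_) ?_
    · simp only [mem_preimage, mem_compl_iff, mem_Icc, not_and, not_le] at hx
      show x ∈ Iic (0:ℝ)
      by_contra hx0
      rw [mem_Iic, not_le] at hx0
      exact absurd (hx (Real.exp_pos _).le)
        (not_lt.mpr (Real.exp_le_one_iff.mpr (by linarith)))
    · rw [hσ, withDensity_apply _ measurableSet_Iic, Measure.restrict_restrict measurableSet_Iic,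
        Set.Iic_inter_Ioi, Set.Ioc_self, Measure.restrict_empty, lintegral_zero_measure]
  -- exponential algebra
  have hexpn : ∀ (n : ℕ) (x : ℝ), Real.exp (-x) * Real.exp (-x) ^ n
      = Real.exp (-(((n : ℝ) + 1) * x)) := by
    intro n x
    rw [← Real.exp_nat_mul, ← Real.exp_add]
    congr 1
    ring_nf
  -- moments
  have hmom : ∀ n : ℕ, ∫ x, x ^ n ∂μ = ∫ x, x ^ n ∂ρ := by
    intro n
    have hpm : AEStronglyMeasurable (fun y : ℝ => y ^ n) (Measure.map φ νw) :=
      (continuous_pow n).measurable.aestronglyMeasurable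
    have hpm' : AEStronglyMeasurable (fun y : ℝ => y ^ n) (Measure.map φ σ) :=
      (continuous_pow n).measurable.aestronglyMeasurable
    have hn1 : (0:ℝ) < (n : ℝ) + 1 := by positivity
    have hμside : ∫ x, x ^ n ∂μ = ((n : ℝ) + 1) ^ (-D) * C := by
      rw [hμ, integral_map hφ.aemeasurable hpm, hνw,
        integral_withDensity_eq_integral_smul₀ hwm.aemeasurable, ← hscal _ hn1]
      refine integral_congr_ae (ae_of_all _ fun x => ?_)
      show w x • (φ x) ^ n = Real.exp (-(((n : ℝ) + 1) * x))
      rw [NNReal.smul_def, smul_eq_mul, hwc]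
      simp only [hφdef]
      exact hexpn n x
    have hρside : ∫ x, x ^ n ∂ρ = ((n : ℝ) + 1) ^ (-D) * C := by
      rw [hρ, integral_map hφ.aemeasurable hpm', hσ,
        integral_withDensity_eq_integral_smul₀ hdm.aemeasurable]
      have step : ∫ x in Ioi (0:ℝ), d x • (φ x) ^ n =
          ∫ x in Ioi (0:ℝ), C / Real.Gamma D *
            (x ^ (D - 1) * Real.exp (-(((n : ℝ) + 1) * x))) := by
        refine integral_congr_ae ?_
        filter_upwards [ae_restrict_mem measurableSet_Ioi] with x hx
        show d x • (φ x) ^ n = _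
        rw [NNReal.smul_def, smul_eq_mul, hdc x hx]
        simp only [hφdef]
        linear_combination (C / Real.Gamma D * x ^ (D - 1)) * hexpn n x
      rw [step, integral_const_mul, Real.integral_rpow_mul_exp_neg_mul_Ioi hD hn1]
      rw [one_div, Real.inv_rpow hn1.le, ← Real.rpow_neg hn1.le]
      field_simp
    rw [hμside, hρside]
  haveI := hμfin; haveI := hρfin
  have hμρ : μ = ρ := moments_ext μ ρ hμsupp hρsupp hmom
  -- the pulled-back test function
  set g : ℝ → ℝ := fun y => if 0 < y then f (-Real.log y) / y else 0 with hg
  have hgm : Measurable g := by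
    refine Measurable.ite measurableSet_Ioi ?_ measurable_const
    exact (hf.comp Real.measurable_log.neg).div measurable_id
  have hgφ : ∀ x, g (φ x) = f x / Real.exp (-x) := by
    intro x
    simp only [hg, hφdef]
    rw [if_pos (Real.exp_pos _), Real.log_exp, neg_neg]
  have claimA : ∀ x, (w x : ℝ) * g (φ x) = f x := by
    intro x
    rw [hwc, hgφ, mul_div_cancel₀ _ (Real.exp_ne_zero _)]
  have claimB : ∀ x ∈ Ioi (0:ℝ), (d x : ℝ) * g (φ x) =
      C / Real.Gamma D * (x ^ (D - 1) * f x) := by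
    intro x hx
    rw [hdc x hx, hgφ]
    field_simp
  -- integrability transfer
  have hgρ : Integrable g ρ := by
    rw [hρ, integrable_map_measure hgm.aestronglyMeasurable hφ.aemeasurable, hσ,
      integrable_withDensity_iff_integrable_smul₀ hdm.aemeasurable]
    refine ((hfint.const_mul (C / Real.Gamma D)).congr ?_)
    filter_upwards [ae_restrict_mem measurableSet_Ioi] with x hx
    show _ = d x • (g ∘ φ) x
    rw [NNReal.smul_def, smul_eq_mul]
    exact (claimB x hx).symm
  have hgμ : Integrable g μ := by rw [hμρ]; exact hgρ
  have hfν : Integrable f ν := by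
    rw [hμ, integrable_map_measure hgm.aestronglyMeasurable hφ.aemeasurable, hνw,
      integrable_withDensity_iff_integrable_smul₀ hwm.aemeasurable] at hgμ
    refine hgμ.congr (ae_of_all _ fun x => ?_)
    show w x • (g ∘ φ) x = f x
    rw [NNReal.smul_def, smul_eq_mul]
    exact claimA x
  refine ⟨hfν, ?_⟩
  -- the integral identity
  have i1 : ∫ x, f x ∂ν = ∫ y, g y ∂μ := by
    rw [hμ, integral_map hφ.aemeasurable hgm.aestronglyMeasurable, hνw,
      integral_withDensity_eq_integral_smul₀ hwm.aemeasurable]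
    refine integral_congr_ae (ae_of_all _ fun x => ?_)
    show f x = w x • g (φ x)
    rw [NNReal.smul_def, smul_eq_mul, claimA]
  have i2 : ∫ y, g y ∂ρ = C / Real.Gamma D * ∫ x in Ioi (0:ℝ), x ^ (D - 1) * f x := by
    rw [hρ, integral_map hφ.aemeasurable hgm.aestronglyMeasurable, hσ,
      integral_withDensity_eq_integral_smul₀ hdm.aemeasurable]
    rw [← integral_const_mul]
    refine integral_congr_ae ?_
    filter_upwards [ae_restrict_mem measurableSet_Ioi] with x hx
    show d x • g (φ x) = _
    rw [NNReal.smul_def, smul_eq_mul, claimB x hx]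
  rw [i1, hμρ, i2]
  ring
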